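/- arXiv:0810.2154 — 2 statements merged into one kernel-verified Lean document; each statement's English description precedes it below -/
import Mathlib

section
/- Let ‖·‖* be a Barabanov norm for the irreducible matrix set 𝒜, let N be any norm on ℝ^m, let γ > 0, and define the norm N′ by N′(x) = max{N(x), γ^{-1} max_{1≤i≤r} N(A_i x)}. Then e⁺(N′, ‖·‖*) ≤ e⁺(N, ‖·‖*) · max{1, γ^{-1} ρ(𝒜)} and e⁻(N′, ‖·‖*) ≥ e⁻(N, ‖·‖*) · max{1, γ^{-1} ρ(𝒜)}; consequently ecc(N′, ‖·‖*) ≤ ecc(N, ‖·‖*). -/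
open Matrix Filter Topology Bornology Pointwise

/-- `N` is a norm on `ℝ^m`: nonnegative, definite, absolutely homogeneous, subadditive. -/
def IsNorm {m : ℕ} (N : (Fin m → ℝ) → ℝ) : Prop :=
  (∀ x, 0 ≤ N x) ∧ (∀ x, N x = 0 → x = 0) ∧
    (∀ (t : ℝ) (x), N (t • x) = |t| * N x) ∧ (∀ x y, N (x + y) ≤ N x + N y)

/-- `N` is a seminorm on `ℝ^m`. -/
def IsSeminorm {m : ℕ} (N : (Fin m → ℝ) → ℝ) : Prop :=
  (∀ x, 0 ≤ N x) ∧
    (∀ (t : ℝ) (x), N (t • x) = |t| * N x) ∧ (∀ x y, N (x + y) ≤ N x + N y)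

/-- The family `A` is irreducible: the matrices have no common invariant subspace
other than `⊥` and `⊤`. -/
def IsIrreducibleFamily {m r : ℕ} (A : Fin r → Matrix (Fin m) (Fin m) ℝ) : Prop :=
  ∀ W : Submodule ℝ (Fin m → ℝ), (∀ i, ∀ x ∈ W, (A i).mulVec x ∈ W) → W = ⊥ ∨ W = ⊤

/-- The operator norm of a matrix acting on `ℝ^m` (with its sup norm). -/
noncomputable def matNorm {m : ℕ} (M : Matrix (Fin m) (Fin m) ℝ) : ℝ :=
  ‖LinearMap.toContinuousLinearMap M.mulVecLin‖

/-- The joint spectral radius of the family `A`: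
`limsup_n (max over words of length n of the norm of the product)^(1/n)`. -/
noncomputable def jsr {m r : ℕ} (A : Fin r → Matrix (Fin m) (Fin m) ℝ) : ℝ :=
  Filter.atTop.limsup fun n : ℕ =>
    (⨆ w : Fin n → Fin r, matNorm (List.ofFn fun k => A (w k)).prod) ^ (1 / (n : ℝ))

/-- `maxA A N x = max_i N (A_i x)`. -/
noncomputable def maxA {m r : ℕ} (A : Fin r → Matrix (Fin m) (Fin m) ℝ)
    (N : (Fin m → ℝ) → ℝ) (x : Fin m → ℝ) : ℝ :=
  ⨆ i, N ((A i).mulVec x)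

/-- `ρ⁺ = max_{x ≠ 0} (max_i N (A_i x)) / N x`. -/
noncomputable def rhoSup {m r : ℕ} (A : Fin r → Matrix (Fin m) (Fin m) ℝ)
    (N : (Fin m → ℝ) → ℝ) : ℝ :=
  sSup ((fun x => maxA A N x / N x) '' {x | x ≠ 0})

/-- `ρ⁻ = min_{x ≠ 0} (max_i N (A_i x)) / N x`. -/
noncomputable def rhoInf {m r : ℕ} (A : Fin r → Matrix (Fin m) (Fin m) ℝ)
    (N : (Fin m → ℝ) → ℝ) : ℝ :=
  sInf ((fun x => maxA A N x / N x) '' {x | x ≠ 0})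

/-- An averaging function: continuous on positives, `γ t t = t`, and strictly
between `min` and `max` off the diagonal. -/
def IsAveraging (γ : ℝ → ℝ → ℝ) : Prop :=
  ContinuousOn (fun p : ℝ × ℝ => γ p.1 p.2) {p | 0 < p.1 ∧ 0 < p.2} ∧
    (∀ t, 0 < t → γ t t = t) ∧
    ∀ t s, 0 < t → 0 < s → t ≠ s → min t s < γ t s ∧ γ t s < max t s

/-- The max-relaxation iteration: `‖x‖_{n+1} = max (‖x‖_n, γ_n⁻¹ max_i ‖A_i x‖_n)`
where `γ_n = γ (ρ⁻_n, ρ⁺_n)`. -/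
noncomputable def iterN {m r : ℕ} (A : Fin r → Matrix (Fin m) (Fin m) ℝ)
    (γ : ℝ → ℝ → ℝ) (N0 : (Fin m → ℝ) → ℝ) : ℕ → (Fin m → ℝ) → ℝ
  | 0 => N0
  | n + 1 => fun x =>
      max (iterN A γ N0 n x)
        ((γ (rhoInf A (iterN A γ N0 n)) (rhoSup A (iterN A γ N0 n)))⁻¹ *
          maxA A (iterN A γ N0 n) x)

/-- The normalized norms `‖x‖°_n = ‖x‖_n / ‖e‖_n` of the max-relaxation iteration
(for `n = 0` this equals `‖x‖_0` since `‖e‖_0 = 1`). -/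
noncomputable def iterNnorm {m r : ℕ} (A : Fin r → Matrix (Fin m) (Fin m) ℝ)
    (γ : ℝ → ℝ → ℝ) (N0 : (Fin m → ℝ) → ℝ) (e : Fin m → ℝ) (n : ℕ) :
    (Fin m → ℝ) → ℝ :=
  fun x => iterN A γ N0 n x / iterN A γ N0 n e

/-- `e⁺(N, N') = max_{x ≠ 0} N x / N' x`. -/
noncomputable def ePlus {m : ℕ} (N N' : (Fin m → ℝ) → ℝ) : ℝ :=
  sSup ((fun x => N x / N' x) '' {x | x ≠ 0})

/-- `e⁻(N, N') = min_{x ≠ 0} N x / N' x`. -/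
noncomputable def eMinus {m : ℕ} (N N' : (Fin m → ℝ) → ℝ) : ℝ :=
  sInf ((fun x => N x / N' x) '' {x | x ≠ 0})

/-- The eccentricity of the norm `N` with respect to the norm `N'`. -/
noncomputable def ecc {m : ℕ} (N N' : (Fin m → ℝ) → ℝ) : ℝ :=
  ePlus N N' / eMinus N N'

lemma isNorm_zero {m : ℕ} {N : (Fin m → ℝ) → ℝ} (hN : IsNorm N) : N 0 = 0 := by
  have h := hN.2.2.1 0 0
  simpa using h

lemma norm_upper {m : ℕ} {N : (Fin m → ℝ) → ℝ} (hN : IsNorm N) :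
    ∃ C : ℝ, 0 ≤ C ∧ ∀ x, N x ≤ C * ‖x‖ := by
  refine ⟨∑ i, N ((Pi.single i 1 : Fin m → ℝ)), Finset.sum_nonneg fun i _ => hN.1 _, fun x => ?_⟩
  have hx : x = ∑ i, (x i) • (Pi.single i 1 : Fin m → ℝ) := by
    have : ∀ i : Fin m, (x i) • (Pi.single i 1 : Fin m → ℝ) = Pi.single i (x i) := by
      intro i; funext j
      by_cases h : j = i <;> simp [Pi.single_apply, h]
    simp only [this, Finset.univ_sum_single]
  calc N x = N (∑ i, (x i) • (Pi.single i 1 : Fin m → ℝ)) := by rw [← hx]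
    _ ≤ ∑ i, N ((x i) • (Pi.single i 1 : Fin m → ℝ)) :=
        Finset.le_sum_of_subadditive N (isNorm_zero hN).le hN.2.2.2 _ _
    _ = ∑ i, |x i| * N ((Pi.single i 1 : Fin m → ℝ)) := by simp [hN.2.2.1]
    _ ≤ ∑ i, ‖x‖ * N ((Pi.single i 1 : Fin m → ℝ)) := by
        refine Finset.sum_le_sum fun i _ => ?_
        exact mul_le_mul_of_nonneg_right (by simpa using norm_le_pi_norm x i) (hN.1 _)
    _ = (∑ i, N ((Pi.single i 1 : Fin m → ℝ))) * ‖x‖ := by rw [← Finset.mul_sum, mul_comm]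

lemma norm_lower {m : ℕ} (hm : 1 ≤ m) {N : (Fin m → ℝ) → ℝ} (hN : IsNorm N) :
    ∃ c : ℝ, 0 < c ∧ ∀ x, c * ‖x‖ ≤ N x := by
  obtain ⟨C, hC0, hC⟩ := norm_upper hN
  have hsub : ∀ x y : Fin m → ℝ, N x - N y ≤ N (x - y) := by
    intro x y
    have h := hN.2.2.2 (x - y) y
    simp only [sub_add_cancel] at h
    linarith
  have hcont : Continuous N := by
    have hlip : LipschitzWith (Real.toNNReal C) N := by
      apply LipschitzWith.of_dist_le_mul
      intro x y
      have h1 := hsub x y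
      have h2 := hsub y x
      have h3 : N (y - x) = N (x - y) := by
        rw [show y - x = (-1 : ℝ) • (x - y) by rw [neg_one_smul, neg_sub], hN.2.2.1]; simp
      rw [h3] at h2
      have h4 : N (x - y) ≤ C * ‖x - y‖ := hC _
      rw [Real.dist_eq, Real.coe_toNNReal C hC0, dist_eq_norm]
      rw [abs_le]; constructor <;> linarith
    exact hlip.continuous
  haveI : Nonempty (Fin m) := ⟨⟨0, hm⟩⟩
  haveI : Nontrivial (Fin m → ℝ) := Function.nontrivial
  have hsph : (Metric.sphere (0 : Fin m → ℝ) 1).Nonempty :=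
    NormedSpace.sphere_nonempty.mpr zero_le_one
  obtain ⟨x₀, hx₀, hmin⟩ := (isCompact_sphere (0 : Fin m → ℝ) 1).exists_isMinOn hsph
    hcont.continuousOn
  have hx₀n : ‖x₀‖ = 1 := mem_sphere_zero_iff_norm.mp hx₀
  have hx₀0 : x₀ ≠ 0 := by intro h; rw [h] at hx₀n; simp at hx₀n
  have hc : 0 < N x₀ := (hN.1 x₀).lt_of_ne fun h => hx₀0 (hN.2.1 x₀ h.symm)
  refine ⟨N x₀, hc, fun x => ?_⟩
  rcases eq_or_ne x 0 with rfl | hx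
  · simp [isNorm_zero hN]
  · have hxn : (0 : ℝ) < ‖x‖ := norm_pos_iff.mpr hx
    have hu : ‖x‖⁻¹ • x ∈ Metric.sphere (0 : Fin m → ℝ) 1 := by
      rw [mem_sphere_zero_iff_norm, norm_smul]
      simp [abs_of_pos (inv_pos.mpr hxn), inv_mul_cancel₀ hxn.ne']
    have h1 : N x₀ ≤ N (‖x‖⁻¹ • x) := hmin hu
    have h2 : N (‖x‖⁻¹ • x) = ‖x‖⁻¹ * N x := by
      rw [hN.2.2.1, abs_of_pos (inv_pos.mpr hxn)]
    rw [h2] at h1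
    calc N x₀ * ‖x‖ ≤ (‖x‖⁻¹ * N x) * ‖x‖ := by nlinarith
      _ = N x := by field_simp

/-- for a Barabanov norm `‖·‖*`, any norm `N`, `γ > 0` and
`N' x = max (N x) (γ⁻¹ max_i N (A_i x))`, one has
`e⁺(N',‖·‖*) ≤ e⁺(N,‖·‖*)·max{1, γ⁻¹ρ(𝒜)}`, `e⁻(N',‖·‖*) ≥ e⁻(N,‖·‖*)·max{1, γ⁻¹ρ(𝒜)}`,
and consequently `ecc(N',‖·‖*) ≤ ecc(N,‖·‖*)`. -/
theorem stmt5 {m r : ℕ} (hm : 2 ≤ m) (hr : 1 ≤ r)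
    (A : Fin r → Matrix (Fin m) (Fin m) ℝ) (hA : IsIrreducibleFamily A)
    (Nstar : (Fin m → ℝ) → ℝ) (hNs : IsNorm Nstar)
    (hbar : ∀ x, jsr A * Nstar x = maxA A Nstar x)
    (N : (Fin m → ℝ) → ℝ) (hN : IsNorm N)
    (γ : ℝ) (hγ : 0 < γ)
    (N' : (Fin m → ℝ) → ℝ) (hN' : ∀ x, N' x = max (N x) (γ⁻¹ * maxA A N x)) :
    ePlus N' Nstar ≤ ePlus N Nstar * max 1 (γ⁻¹ * jsr A) ∧
      eMinus N Nstar * max 1 (γ⁻¹ * jsr A) ≤ eMinus N' Nstar ∧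
      ecc N' Nstar ≤ ecc N Nstar := by
  haveI hner : Nonempty (Fin r) := ⟨⟨0, hr⟩⟩
  obtain ⟨x₀, hx₀⟩ : ∃ x : Fin m → ℝ, x ≠ 0 :=
    ⟨fun _ => 1, by
      intro h
      have := congrFun h ⟨0, by omega⟩
      simp at this⟩
  obtain ⟨CN, hCN0, hCN⟩ := norm_upper hN
  obtain ⟨cN, hcN0, hcN⟩ := norm_lower (by omega) hN
  obtain ⟨CS, hCS0, hCS⟩ := norm_upper hNs
  obtain ⟨cS, hcS0, hcS⟩ := norm_lower (by omega) hNs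
  have hNsx : ∀ x : Fin m → ℝ, x ≠ 0 → 0 < Nstar x := fun x hx =>
    (hNs.1 x).lt_of_ne fun h => hx (hNs.2.1 x h.symm)
  -- the set of ratios for N
  have hSNne : ((fun x => N x / Nstar x) '' {x | x ≠ 0}).Nonempty := ⟨_, ⟨x₀, hx₀, rfl⟩⟩
  have hSNbdd : BddAbove ((fun x => N x / Nstar x) '' {x | x ≠ 0}) := by
    refine ⟨CN / cS, ?_⟩
    rintro _ ⟨x, hx, rfl⟩
    have hxn : (0 : ℝ) < ‖x‖ := norm_pos_iff.mpr hx
    have h1 : N x / Nstar x ≤ (CN * ‖x‖) / (cS * ‖x‖) :=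
      div_le_div₀ (by positivity) (hCN x) (by positivity) (hcS x)
    rwa [mul_div_mul_right _ _ hxn.ne'] at h1
  have hSNbdd0 : BddBelow ((fun x => N x / Nstar x) '' {x | x ≠ 0}) := by
    refine ⟨0, ?_⟩
    rintro _ ⟨x, hx, rfl⟩
    exact div_nonneg (hN.1 x) (hNs.1 x)
  set P := ePlus N Nstar with hPdef
  set Q := eMinus N Nstar with hQdef
  have hP : ∀ x, N x ≤ P * Nstar x := by
    intro x
    rcases eq_or_ne x 0 with rfl | hx
    · simp [isNorm_zero hN, isNorm_zero hNs]
    · have h1 : N x / Nstar x ≤ P := le_csSup hSNbdd ⟨x, hx, rfl⟩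
      have := (div_le_iff₀ (hNsx x hx)).mp h1
      linarith
  have hP0 : 0 ≤ P :=
    le_trans (div_nonneg (hN.1 x₀) (hNs.1 x₀)) (le_csSup hSNbdd ⟨x₀, hx₀, rfl⟩)
  have hQ : ∀ x, Q * Nstar x ≤ N x := by
    intro x
    rcases eq_or_ne x 0 with rfl | hx
    · simp [isNorm_zero hN, isNorm_zero hNs]
    · have h1 : Q ≤ N x / Nstar x := csInf_le hSNbdd0 ⟨x, hx, rfl⟩
      exact (le_div_iff₀ (hNsx x hx)).mp h1
  have hCSpos : 0 < CS := by
    have h1 := hcS x₀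
    have h2 := hCS x₀
    have hxn : (0 : ℝ) < ‖x₀‖ := norm_pos_iff.mpr hx₀
    nlinarith
  have hQpos : 0 < Q := by
    have hlow : cN / CS ≤ Q := by
      apply le_csInf hSNne
      rintro _ ⟨x, hx, rfl⟩
      have hxn : (0 : ℝ) < ‖x‖ := norm_pos_iff.mpr hx
      have h1 : (cN * ‖x‖) / (CS * ‖x‖) ≤ N x / Nstar x :=
        div_le_div₀ (hN.1 x) (hcN x) (hNsx x hx) (hCS x)
      rwa [mul_div_mul_right _ _ hxn.ne'] at h1
    exact lt_of_lt_of_le (by positivity) hlow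
  -- jsr is nonnegative
  have hmaxA_bdd : ∀ (M : (Fin m → ℝ) → ℝ) (x : Fin m → ℝ),
      BddAbove (Set.range fun i => M ((A i).mulVec x)) :=
    fun M x => (Set.finite_range _).bddAbove
  have hjsr0 : 0 ≤ jsr A := by
    have h1 : 0 ≤ maxA A Nstar x₀ := Real.iSup_nonneg fun i => hNs.1 _
    have h2 := hbar x₀
    have h3 := hNsx x₀ hx₀
    nlinarith
  -- the pointwise maxA bounds
  have hmaxA_le : ∀ x, maxA A N x ≤ P * (jsr A * Nstar x) := by
    intro x
    rw [hbar x]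
    refine ciSup_le fun i => (hP _).trans ?_
    exact mul_le_mul_of_nonneg_left (le_ciSup (hmaxA_bdd Nstar x) i) hP0
  have hmaxA_ge : ∀ x, Q * (jsr A * Nstar x) ≤ maxA A N x := by
    intro x
    rw [hbar x]
    obtain ⟨i₀, hi₀⟩ := Finite.exists_max fun i => Nstar ((A i).mulVec x)
    calc Q * maxA A Nstar x ≤ Q * Nstar ((A i₀).mulVec x) :=
          mul_le_mul_of_nonneg_left (ciSup_le hi₀) hQpos.le
      _ ≤ N ((A i₀).mulVec x) := hQ _
      _ ≤ maxA A N x := le_ciSup (hmaxA_bdd N x) i₀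
  set C := max 1 (γ⁻¹ * jsr A) with hCdef
  have hC1 : (1 : ℝ) ≤ C := le_max_left _ _
  have hC0 : (0 : ℝ) < C := lt_of_lt_of_le one_pos hC1
  have hC2 : γ⁻¹ * jsr A ≤ C := le_max_right _ _
  have hγi : (0 : ℝ) ≤ γ⁻¹ := (inv_pos.mpr hγ).le
  -- pointwise bounds on N'
  have key1 : ∀ x, N' x ≤ P * C * Nstar x := by
    intro x
    rw [hN' x]
    apply max_le
    · have h1 := hP x
      nlinarith [hNs.1 x, mul_nonneg hP0 (hNs.1 x)]
    · calc γ⁻¹ * maxA A N x ≤ γ⁻¹ * (P * (jsr A * Nstar x)) :=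
            mul_le_mul_of_nonneg_left (hmaxA_le x) hγi
        _ = P * ((γ⁻¹ * jsr A) * Nstar x) := by ring
        _ ≤ P * (C * Nstar x) := by
            nlinarith [mul_nonneg (mul_nonneg hP0 (hNs.1 x)) (sub_nonneg.mpr hC2)]
        _ = P * C * Nstar x := by ring
  have key2 : ∀ x, Q * C * Nstar x ≤ N' x := by
    intro x
    rw [hN' x]
    rcases max_choice 1 (γ⁻¹ * jsr A) with hc | hc
    · rw [hCdef, hc]
      calc Q * 1 * Nstar x = Q * Nstar x := by ring
        _ ≤ N x := hQ x
        _ ≤ max (N x) (γ⁻¹ * maxA A N x) := le_max_left _ _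
    · rw [hCdef, hc]
      calc Q * (γ⁻¹ * jsr A) * Nstar x = γ⁻¹ * (Q * (jsr A * Nstar x)) := by ring
        _ ≤ γ⁻¹ * maxA A N x := mul_le_mul_of_nonneg_left (hmaxA_ge x) hγi
        _ ≤ max (N x) (γ⁻¹ * maxA A N x) := le_max_right _ _
  -- the three goals
  have G1 : ePlus N' Nstar ≤ P * C := by
    refine csSup_le ⟨N' x₀ / Nstar x₀, ⟨x₀, hx₀, rfl⟩⟩ ?_
    rintro _ ⟨x, hx, rfl⟩
    exact (div_le_iff₀ (hNsx x hx)).mpr ((key1 x).trans_eq (by ring))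
  have G2 : Q * C ≤ eMinus N' Nstar := by
    refine le_csInf ⟨N' x₀ / Nstar x₀, ⟨x₀, hx₀, rfl⟩⟩ ?_
    rintro _ ⟨x, hx, rfl⟩
    exact (le_div_iff₀ (hNsx x hx)).mpr (key2 x)
  refine ⟨G1, G2, ?_⟩
  have h1 : ePlus N' Nstar / eMinus N' Nstar ≤ (P * C) / (Q * C) :=
    div_le_div₀ (mul_nonneg hP0 hC0.le) G1 (mul_pos hQpos hC0) G2
  have h2 : (P * C) / (Q * C) = P / Q := mul_div_mul_right _ _ hC0.ne'
  calc ecc N' Nstar = ePlus N' Nstar / eMinus N' Nstar := rfl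
    _ ≤ (P * C) / (Q * C) := h1
    _ = P / Q := h2
    _ = ecc N Nstar := rfl
end

section
/- Let ‖·‖* be a Barabanov norm for the irreducible matrix set 𝒜 and let ‖·‖°_n be the normalized norms produced by the max-relaxation iteration. Then for every n ≥ 0 and every x ∈ ℝ^m, (1/ecc(‖·‖_0, ‖·‖*)) · ‖x‖*/‖e‖* ≤ ‖x‖°_n ≤ ecc(‖·‖_0, ‖·‖*) · ‖x‖*/‖e‖*; in particular the family of norms {‖·‖°_n} is uniformly bounded and equicontinuous on every bounded subset of ℝ^m. -/
open Matrix Filter Topology Bornology Pointwise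

section helpers

variable {m : ℕ} {N : (Fin m → ℝ) → ℝ}

lemma IsNorm.isSeminorm (h : IsNorm N) : IsSeminorm N := ⟨h.1, h.2.2.1, h.2.2.2⟩

lemma IsSeminorm.zero (h : IsSeminorm N) : N 0 = 0 := by
  have := h.2.1 0 0
  simpa using this

lemma IsSeminorm.sum (h : IsSeminorm N) {ι : Type*} (s : Finset ι) (f : ι → Fin m → ℝ) :
    N (∑ i ∈ s, f i) ≤ ∑ i ∈ s, N (f i) := by
  classical
  induction s using Finset.induction_on with
  | empty => simp [h.zero]
  | insert _ _ hx ih =>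
    rw [Finset.sum_insert hx, Finset.sum_insert hx]
    exact (h.2.2 _ _).trans (by gcongr)

lemma IsSeminorm.abs_sub (h : IsSeminorm N) (x y : Fin m → ℝ) :
    |N x - N y| ≤ N (x - y) := by
  have hneg : ∀ z : Fin m → ℝ, N (-z) = N z := by
    intro z
    have := h.2.1 (-1) z
    simpa using this
  rw [abs_sub_le_iff]
  constructor
  · have := h.2.2 (x - y) y
    simpa using this
  · have := h.2.2 (y - x) x
    have h2 : N (y - x) = N (x - y) := by
      rw [← hneg (y - x)]; congr 1; abel
    simp only [sub_add_cancel] at this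
    linarith

lemma IsSeminorm.le_norm (h : IsSeminorm N) : ∃ C > 0, ∀ x, N x ≤ C * ‖x‖ := by
  classical
  have hC0 : 0 ≤ ∑ i, N (Pi.single i 1) := Finset.sum_nonneg fun i _ => h.1 _
  refine ⟨(∑ i, N (Pi.single i 1)) + 1, by linarith, fun x => ?_⟩
  have hx : x = ∑ i, Pi.single i (x i) := (Finset.univ_sum_single x).symm
  calc N x = N (∑ i, Pi.single i (x i)) := by rw [← hx]
    _ ≤ ∑ i, N (Pi.single i (x i)) := h.sum _ _
    _ ≤ ∑ i, N (Pi.single i 1) * ‖x‖ := by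
        refine Finset.sum_le_sum fun i _ => ?_
        have h1 : Pi.single i (x i) = x i • (Pi.single i 1 : Fin m → ℝ) := by
          ext j
          by_cases hj : j = i <;> simp [hj, Pi.single_apply]
        rw [h1, h.2.1]
        have : |x i| ≤ ‖x‖ := by
          simpa [Real.norm_eq_abs] using norm_le_pi_norm x i
        rw [mul_comm (N (Pi.single i 1))]
        exact mul_le_mul_of_nonneg_right this (h.1 _)
    _ = (∑ i, N (Pi.single i 1)) * ‖x‖ := by rw [Finset.sum_mul]
    _ ≤ ((∑ i, N (Pi.single i 1)) + 1) * ‖x‖ := by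
        have := norm_nonneg x; have := hC0; nlinarith

lemma IsSeminorm.continuous (h : IsSeminorm N) : Continuous N := by
  obtain ⟨C, hC, hle⟩ := h.le_norm
  refine (LipschitzWith.of_dist_le_mul (K := ⟨C, hC.le⟩) fun x y => ?_).continuous
  rw [Real.dist_eq, dist_eq_norm]
  exact (h.abs_sub x y).trans (hle _)

lemma IsNorm.norm_le (hm : 0 < m) (h : IsNorm N) : ∃ c > 0, ∀ x, c * ‖x‖ ≤ N x := by
  haveI : Nonempty (Fin m) := ⟨⟨0, hm⟩⟩
  have hcpt : IsCompact (Metric.sphere (0 : Fin m → ℝ) 1) := isCompact_sphere _ _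
  have hne : (Metric.sphere (0 : Fin m → ℝ) 1).Nonempty := by
    refine ⟨fun _ => 1, ?_⟩
    simp [mem_sphere_iff_norm]
  obtain ⟨z, hz, hzmin⟩ := hcpt.exists_isMinOn hne h.isSeminorm.continuous.continuousOn
  have hz1 : ‖z‖ = 1 := by simpa [mem_sphere_iff_norm] using hz
  have hzne : z ≠ 0 := by intro h0; rw [h0] at hz1; simp at hz1
  have hNz : 0 < N z := by
    rcases (h.1 z).lt_or_eq with h1 | h1
    · exact h1
    · exact absurd (h.2.1 z h1.symm) hzne
  refine ⟨N z, hNz, fun x => ?_⟩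
  rcases eq_or_ne x 0 with rfl | hx
  · simp [h.isSeminorm.zero]
  · have hxn : 0 < ‖x‖ := norm_pos_iff.2 hx
    set u : Fin m → ℝ := ‖x‖⁻¹ • x with hu
    have hus : u ∈ Metric.sphere (0 : Fin m → ℝ) 1 := by
      simp [mem_sphere_iff_norm, hu, norm_smul, abs_of_pos (inv_pos.2 hxn),
        inv_mul_cancel₀ hxn.ne']
    have hxu : x = ‖x‖ • u := by
      rw [hu, smul_smul, mul_inv_cancel₀ hxn.ne', one_smul]
    have : N x = ‖x‖ * N u := by
      have h2 := h.2.2.1 ‖x‖ u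
      rw [← hxu, abs_of_pos hxn] at h2
      exact h2
    rw [this, mul_comm (N z) ‖x‖]
    exact mul_le_mul_of_nonneg_left (hzmin hus) hxn.le

lemma norm_pos_of_ne {h : IsNorm N} {x : Fin m → ℝ} (hx : x ≠ 0) : 0 < N x := by
  rcases (h.1 x).lt_or_eq with h1 | h1
  · exact h1
  · exact absurd (h.2.1 x h1.symm) hx

/-- Workhorse: bounds on `sInf`/`sSup` of an image over nonzero vectors. -/
lemma image_bounds {f : (Fin m → ℝ) → ℝ} {lo hi : ℝ} (hm : 0 < m)
    (h : ∀ x : Fin m → ℝ, x ≠ 0 → lo ≤ f x ∧ f x ≤ hi) :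
    lo ≤ sInf (f '' {x | x ≠ 0}) ∧ sInf (f '' {x | x ≠ 0}) ≤ sSup (f '' {x | x ≠ 0}) ∧
      sSup (f '' {x | x ≠ 0}) ≤ hi ∧
      ∀ x : Fin m → ℝ, x ≠ 0 → sInf (f '' {x | x ≠ 0}) ≤ f x ∧ f x ≤ sSup (f '' {x | x ≠ 0}) := by
  have hx0 : (fun _ => (1:ℝ) : Fin m → ℝ) ≠ 0 := by
    intro h0
    have := congr_fun h0 ⟨0, hm⟩
    simp at this
  have hne : (f '' {x | x ≠ 0}).Nonempty := ⟨f _, ⟨_, hx0, rfl⟩⟩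
  have hbdda : BddAbove (f '' {x | x ≠ 0}) := ⟨hi, by rintro y ⟨x, hx, rfl⟩; exact (h x hx).2⟩
  have hbddb : BddBelow (f '' {x | x ≠ 0}) := ⟨lo, by rintro y ⟨x, hx, rfl⟩; exact (h x hx).1⟩
  exact ⟨le_csInf hne (by rintro y ⟨x, hx, rfl⟩; exact (h x hx).1),
    csInf_le_csSup hne hbddb hbdda,
    csSup_le hne (by rintro y ⟨x, hx, rfl⟩; exact (h x hx).2),
    fun x hx => ⟨csInf_le hbddb ⟨x, hx, rfl⟩, le_csSup hbdda ⟨x, hx, rfl⟩⟩⟩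

variable {r : ℕ}

lemma maxA_le (hr : 0 < r) {A : Fin r → Matrix (Fin m) (Fin m) ℝ} {N : (Fin m → ℝ) → ℝ}
    {x : Fin m → ℝ} {c : ℝ} (h : ∀ i, N ((A i).mulVec x) ≤ c) : maxA A N x ≤ c := by
  haveI : Nonempty (Fin r) := ⟨⟨0, hr⟩⟩
  exact ciSup_le h

lemma le_maxA {A : Fin r → Matrix (Fin m) (Fin m) ℝ} {N : (Fin m → ℝ) → ℝ}
    (i : Fin r) {x : Fin m → ℝ} : N ((A i).mulVec x) ≤ maxA A N x := by
  unfold maxA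
  exact le_ciSup (Set.Finite.bddAbove (Set.finite_range fun j => N ((A j).mulVec x))) i

lemma jsr_pos {m r : ℕ} (hm : 2 ≤ m) (hr : 1 ≤ r)
    (A : Fin r → Matrix (Fin m) (Fin m) ℝ) (hA : IsIrreducibleFamily A)
    {Nstar : (Fin m → ℝ) → ℝ} (hNs : IsNorm Nstar)
    (hbar : ∀ x, jsr A * Nstar x = maxA A Nstar x) : 0 < jsr A := by
  haveI : Nonempty (Fin r) := ⟨⟨0, hr⟩⟩
  set v0 : Fin m → ℝ := Pi.single (⟨0, by omega⟩ : Fin m) 1 with hv0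
  have hv0ne : v0 ≠ 0 := by
    intro h0
    have := congr_fun h0 ⟨0, by omega⟩
    simp [hv0] at this
  have hNv0 : 0 < Nstar v0 := norm_pos_of_ne (h := hNs) hv0ne
  have hmaxnn : ∀ x : Fin m → ℝ, 0 ≤ maxA A Nstar x := fun x =>
    (hNs.1 _).trans (le_maxA (⟨0, hr⟩ : Fin r))
  have hge : 0 ≤ jsr A := by
    have h1 := hbar v0
    nlinarith [hmaxnn v0]
  rcases hge.lt_or_eq with h | h
  · exact h
  · exfalso
    have hz : ∀ (i : Fin r) (x : Fin m → ℝ), (A i).mulVec x = 0 := by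
      intro i x
      have h1 : maxA A Nstar x = 0 := by rw [← hbar, ← h, zero_mul]
      have h2 : Nstar ((A i).mulVec x) ≤ 0 := h1 ▸ le_maxA i
      exact hNs.2.1 _ (le_antisymm h2 (hNs.1 _))
    have hinv : ∀ i, ∀ x ∈ Submodule.span ℝ {v0}, (A i).mulVec x ∈ Submodule.span ℝ {v0} := by
      intro i x _
      rw [hz]
      exact Submodule.zero_mem _
    rcases hA _ hinv with hbot | htop
    · have hmem : v0 ∈ Submodule.span ℝ {v0} := Submodule.mem_span_singleton_self v0
      rw [hbot] at hmem
      exact hv0ne (by simpa using hmem)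
    · have hv1 : (Pi.single (⟨1, by omega⟩ : Fin m) 1 : Fin m → ℝ) ∈ Submodule.span ℝ {v0} := by
        rw [htop]; exact Submodule.mem_top
      obtain ⟨t, ht⟩ := Submodule.mem_span_singleton.1 hv1
      have h1 := congr_fun ht ⟨1, by omega⟩
      have hne01 : (⟨1, by omega⟩ : Fin m) ≠ (⟨0, by omega⟩ : Fin m) := by
        simp [Fin.ext_iff]
      simp [hv0, Pi.single_apply, hne01, smul_eq_mul] at h1

end helpers

/-- the normalized norms `‖·‖°_n` are sandwiched between
`ecc(‖·‖_0,‖·‖*)⁻¹·‖x‖*/‖e‖*` and `ecc(‖·‖_0,‖·‖*)·‖x‖*/‖e‖*`; in particular the family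
`{‖·‖°_n}` is uniformly bounded and equicontinuous on every bounded subset of `ℝ^m`. -/
theorem stmt6 {m r : ℕ} (hm : 2 ≤ m) (hr : 1 ≤ r)
    (A : Fin r → Matrix (Fin m) (Fin m) ℝ) (hA : IsIrreducibleFamily A)
    (γ : ℝ → ℝ → ℝ) (hγ : IsAveraging γ)
    (N0 : (Fin m → ℝ) → ℝ) (hN0 : IsNorm N0)
    (e : Fin m → ℝ) (he : N0 e = 1)
    (Nstar : (Fin m → ℝ) → ℝ) (hNs : IsNorm Nstar)
    (hbar : ∀ x, jsr A * Nstar x = maxA A Nstar x) :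
    (∀ (n : ℕ) (x : Fin m → ℝ),
        (ecc N0 Nstar)⁻¹ * (Nstar x / Nstar e) ≤ iterNnorm A γ N0 e n x ∧
          iterNnorm A γ N0 e n x ≤ ecc N0 Nstar * (Nstar x / Nstar e)) ∧
      ∀ S : Set (Fin m → ℝ), IsBounded S →
        (∃ C : ℝ, ∀ (n : ℕ), ∀ x ∈ S, iterNnorm A γ N0 e n x ≤ C) ∧
          EquicontinuousOn (fun n : ℕ => iterNnorm A γ N0 e n) S := by
  have hm0 : 0 < m := by omega
  have hr0 : 0 < r := hr
  haveI : Nonempty (Fin r) := ⟨⟨0, hr0⟩⟩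
  obtain ⟨C0, hC0, hN0le⟩ := hN0.isSeminorm.le_norm
  obtain ⟨c0, hc0, hN0ge⟩ := hN0.norm_le hm0
  obtain ⟨Cs, hCs, hNsle⟩ := hNs.isSeminorm.le_norm
  obtain ⟨cs, hcs, hNsge⟩ := hNs.norm_le hm0
  set ρ := jsr A with hρdef
  have hρ : 0 < ρ := jsr_pos hm hr A hA hNs hbar
  have hNspos : ∀ x : Fin m → ℝ, x ≠ 0 → 0 < Nstar x := fun x hx => norm_pos_of_ne (h := hNs) hx
  -- bounds on a = e⁻(N0, N*), b = e⁺(N0, N*)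
  have hfb : ∀ x : Fin m → ℝ, x ≠ 0 → c0 / Cs ≤ N0 x / Nstar x ∧ N0 x / Nstar x ≤ C0 / cs := by
    intro x hx
    have hxn : 0 < ‖x‖ := norm_pos_iff.2 hx
    have hNsx : 0 < Nstar x := hNspos x hx
    constructor
    · rw [div_le_div_iff₀ (by positivity) hNsx]
      nlinarith [mul_le_mul_of_nonneg_left (hNsle x) hc0.le,
        mul_le_mul_of_nonneg_left (hN0ge x) hCs.le]
    · rw [div_le_div_iff₀ hNsx (by positivity)]
      nlinarith [mul_le_mul_of_nonneg_left (hN0le x) hcs.le,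
        mul_le_mul_of_nonneg_left (hNsge x) hC0.le]
  obtain ⟨halo, hab, hbhi, hmem⟩ := image_bounds hm0 hfb
  set a : ℝ := eMinus N0 Nstar with hadef
  set b : ℝ := ePlus N0 Nstar with hbdef
  have haInf : a = sInf ((fun x => N0 x / Nstar x) '' {x | x ≠ 0}) := rfl
  have hbSup : b = sSup ((fun x => N0 x / Nstar x) '' {x | x ≠ 0}) := rfl
  rw [← haInf] at halo hab hmem
  rw [← hbSup] at hbhi hab hmem
  have ha : 0 < a := lt_of_lt_of_le (by positivity) halo
  have hb : 0 < b := ha.trans_le hab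
  have hsand : ∀ x : Fin m → ℝ, a * Nstar x ≤ N0 x ∧ N0 x ≤ b * Nstar x := by
    intro x
    rcases eq_or_ne x 0 with rfl | hx
    · simp [hN0.isSeminorm.zero, hNs.isSeminorm.zero]
    · have hNsx : 0 < Nstar x := hNspos x hx
      obtain ⟨h1, h2⟩ := hmem x hx
      exact ⟨(le_div_iff₀ hNsx).1 h1, (div_le_iff₀ hNsx).1 h2⟩
  have hecc : ecc N0 Nstar = b / a := rfl
  -- the key induction
  have key : ∀ n, IsSeminorm (iterN A γ N0 n) ∧ ∃ c, 0 < c ∧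
      ∀ x, c * (a * Nstar x) ≤ iterN A γ N0 n x ∧ iterN A γ N0 n x ≤ c * (b * Nstar x) := by
    intro n
    induction n with
    | zero =>
      refine ⟨hN0.isSeminorm, 1, one_pos, fun x => ?_⟩
      simpa [iterN] using hsand x
    | succ n ih =>
      obtain ⟨hsn, c, hc, hbd⟩ := ih
      set Nn := iterN A γ N0 n with hNn
      have hub : ∀ x, maxA A Nn x ≤ c * (b * (ρ * Nstar x)) := by
        intro x
        refine maxA_le hr0 fun i => ?_
        calc Nn ((A i).mulVec x) ≤ c * (b * Nstar ((A i).mulVec x)) := (hbd _).2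
          _ ≤ c * (b * maxA A Nstar x) := by
              have h2 := le_maxA (A := A) (N := Nstar) i (x := x)
              exact mul_le_mul_of_nonneg_left
                (mul_le_mul_of_nonneg_left h2 hb.le) hc.le
          _ = c * (b * (ρ * Nstar x)) := by rw [← hbar]
      have hlb : ∀ x, c * (a * (ρ * Nstar x)) ≤ maxA A Nn x := by
        intro x
        obtain ⟨i0, hi0⟩ := Finite.exists_max fun i => Nstar ((A i).mulVec x)
        have hmx : maxA A Nstar x = Nstar ((A i0).mulVec x) :=
          le_antisymm (maxA_le hr0 hi0) (le_maxA i0)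
        calc c * (a * (ρ * Nstar x)) = c * (a * maxA A Nstar x) := by rw [← hbar]
          _ = c * (a * Nstar ((A i0).mulVec x)) := by rw [hmx]
          _ ≤ Nn ((A i0).mulVec x) := (hbd _).1
          _ ≤ maxA A Nn x := le_maxA i0
      have hNnpos : ∀ x : Fin m → ℝ, x ≠ 0 → 0 < Nn x := fun x hx =>
        lt_of_lt_of_le (by have := hNspos x hx; positivity) (hbd x).1
      have hratio : ∀ x : Fin m → ℝ, x ≠ 0 →
          a * ρ / b ≤ maxA A Nn x / Nn x ∧ maxA A Nn x / Nn x ≤ b * ρ / a := by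
        intro x hx
        have hNsx : 0 < Nstar x := hNspos x hx
        have hNnx : 0 < Nn x := hNnpos x hx
        constructor
        · rw [le_div_iff₀ hNnx]
          have h1 : a * ρ / b * (c * (b * Nstar x)) = c * (a * (ρ * Nstar x)) := by
            field_simp
          calc a * ρ / b * Nn x ≤ a * ρ / b * (c * (b * Nstar x)) :=
                mul_le_mul_of_nonneg_left (hbd x).2 (by positivity)
            _ = c * (a * (ρ * Nstar x)) := h1
            _ ≤ maxA A Nn x := hlb x
        · rw [div_le_iff₀ hNnx]
          have h1 : b * ρ / a * (c * (a * Nstar x)) = c * (b * (ρ * Nstar x)) := by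
            field_simp
          calc maxA A Nn x ≤ c * (b * (ρ * Nstar x)) := hub x
            _ = b * ρ / a * (c * (a * Nstar x)) := h1.symm
            _ ≤ b * ρ / a * Nn x :=
                mul_le_mul_of_nonneg_left (hbd x).1 (by positivity)
      obtain ⟨hrlo, hrio, hrhi, _⟩ := image_bounds hm0 hratio
      have hInf : rhoInf A Nn = sInf ((fun x => maxA A Nn x / Nn x) '' {x | x ≠ 0}) := rfl
      have hSup : rhoSup A Nn = sSup ((fun x => maxA A Nn x / Nn x) '' {x | x ≠ 0}) := rfl
      rw [← hInf] at hrlo hrio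
      rw [← hSup] at hrio hrhi
      have hρinf_pos : 0 < rhoInf A Nn := lt_of_lt_of_le (by positivity) hrlo
      have hρsup_pos : 0 < rhoSup A Nn := hρinf_pos.trans_le hrio
      set g := γ (rhoInf A Nn) (rhoSup A Nn) with hgdef
      have hgpos : 0 < g := by
        rcases eq_or_ne (rhoInf A Nn) (rhoSup A Nn) with hEq | hNe
        · rw [hgdef, hEq, hγ.2.1 _ hρsup_pos]; exact hρsup_pos
        · have h1 := (hγ.2.2 _ _ hρinf_pos hρsup_pos hNe).1
          calc (0:ℝ) < min (rhoInf A Nn) (rhoSup A Nn) := lt_min hρinf_pos hρsup_pos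
            _ < g := h1
      have hiter : ∀ x, iterN A γ N0 (n+1) x = max (Nn x) (g⁻¹ * maxA A Nn x) := by
        intro x
        rw [iterN]
      have hmaxA_add : ∀ x y, maxA A Nn (x + y) ≤ maxA A Nn x + maxA A Nn y := by
        intro x y
        refine maxA_le hr0 fun i => ?_
        rw [Matrix.mulVec_add]
        exact (hsn.2.2 _ _).trans (add_le_add (le_maxA i) (le_maxA i))
      have hmaxA_smul : ∀ (t : ℝ) (x), maxA A Nn (t • x) = |t| * maxA A Nn x := by
        intro t x
        unfold maxA
        rw [Real.mul_iSup_of_nonneg (abs_nonneg t)]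
        congr 1
        ext i
        rw [Matrix.mulVec_smul]
        exact hsn.2.1 t _
      have hsem : IsSeminorm (iterN A γ N0 (n+1)) := by
        refine ⟨fun x => ?_, fun t x => ?_, fun x y => ?_⟩
        · rw [hiter]
          exact (hsn.1 x).trans (le_max_left _ _)
        · rw [hiter, hiter, hsn.2.1, hmaxA_smul,
            mul_max_of_nonneg _ _ (abs_nonneg t)]
          congr 1
          ring
        · rw [hiter, hiter, hiter]
          refine max_le ((hsn.2.2 x y).trans
            (add_le_add (le_max_left _ _) (le_max_left _ _))) ?_
          calc g⁻¹ * maxA A Nn (x + y) ≤ g⁻¹ * (maxA A Nn x + maxA A Nn y) :=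
                mul_le_mul_of_nonneg_left (hmaxA_add x y) (by positivity)
            _ = g⁻¹ * maxA A Nn x + g⁻¹ * maxA A Nn y := by ring
            _ ≤ _ := add_le_add (le_max_right _ _) (le_max_right _ _)
      refine ⟨hsem, c * max 1 (ρ / g), by positivity, fun x => ?_⟩
      have hNsx : 0 ≤ Nstar x := hNs.1 x
      constructor
      · rw [hiter]
        rcases le_total (ρ / g) 1 with hcase | hcase
        · rw [max_eq_left hcase]
          calc c * 1 * (a * Nstar x) = c * (a * Nstar x) := by ring
            _ ≤ Nn x := (hbd x).1
            _ ≤ _ := le_max_left _ _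
        · rw [max_eq_right hcase]
          have h1 : c * (ρ / g) * (a * Nstar x) = g⁻¹ * (c * (a * (ρ * Nstar x))) := by
            field_simp
          rw [h1]
          exact le_max_of_le_right (mul_le_mul_of_nonneg_left (hlb x) (by positivity))
      · rw [hiter]
        have hmax1 : (1:ℝ) ≤ max 1 (ρ / g) := le_max_left _ _
        have hmax2 : ρ / g ≤ max 1 (ρ / g) := le_max_right _ _
        refine max_le ?_ ?_
        · calc Nn x ≤ c * (b * Nstar x) := (hbd x).2
            _ = c * 1 * (b * Nstar x) := by ring
            _ ≤ c * max 1 (ρ / g) * (b * Nstar x) :=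
                mul_le_mul_of_nonneg_right
                  (mul_le_mul_of_nonneg_left hmax1 hc.le)
                  (mul_nonneg hb.le hNsx)
        · calc g⁻¹ * maxA A Nn x ≤ g⁻¹ * (c * (b * (ρ * Nstar x))) :=
              mul_le_mul_of_nonneg_left (hub x) (by positivity)
            _ = c * (ρ / g) * (b * Nstar x) := by field_simp
            _ ≤ c * max 1 (ρ / g) * (b * Nstar x) :=
                mul_le_mul_of_nonneg_right
                  (mul_le_mul_of_nonneg_left hmax2 hc.le)
                  (mul_nonneg hb.le hNsx)
  -- assembling the two parts
  have hene : e ≠ 0 := by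
    intro h0
    rw [h0, hN0.isSeminorm.zero] at he
    exact one_ne_zero he.symm
  have hNse : 0 < Nstar e := hNspos e hene
  have main : ∀ (n : ℕ) (x : Fin m → ℝ),
      (ecc N0 Nstar)⁻¹ * (Nstar x / Nstar e) ≤ iterNnorm A γ N0 e n x ∧
        iterNnorm A γ N0 e n x ≤ ecc N0 Nstar * (Nstar x / Nstar e) := by
    intro n x
    obtain ⟨hsn, c, hc, hbd⟩ := key n
    have hNnE : 0 < iterN A γ N0 n e :=
      lt_of_lt_of_le (by positivity) (hbd e).1
    have hNsx : 0 ≤ Nstar x := hNs.1 x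
    have hF : iterNnorm A γ N0 e n x = iterN A γ N0 n x / iterN A γ N0 n e := rfl
    constructor
    · have h1 : (ecc N0 Nstar)⁻¹ * (Nstar x / Nstar e) =
          (c * (a * Nstar x)) / (c * (b * Nstar e)) := by
        rw [hecc]
        field_simp
      rw [h1, hF]
      exact div_le_div₀ (hsn.1 x) (hbd x).1 hNnE (hbd e).2
    · have h1 : ecc N0 Nstar * (Nstar x / Nstar e) =
          (c * (b * Nstar x)) / (c * (a * Nstar e)) := by
        rw [hecc]
        field_simp
      rw [h1, hF]
      exact div_le_div₀ (by positivity) (hbd x).2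
        (by have := hNs.1 e; positivity) (hbd e).1
  refine ⟨main, fun S hS => ?_⟩
  obtain ⟨R, hR⟩ := isBounded_iff_forall_norm_le.1 hS
  constructor
  · refine ⟨b / a * (Cs * max R 0 / Nstar e), fun n x hx => ?_⟩
    refine ((main n x).2).trans ?_
    rw [hecc]
    have hx1 : Nstar x ≤ Cs * max R 0 := by
      calc Nstar x ≤ Cs * ‖x‖ := hNsle x
        _ ≤ Cs * max R 0 := by
            have := hR x hx
            nlinarith [le_max_left R 0, norm_nonneg x]
    gcongr
  · have hK : ∀ (n : ℕ) (x y : Fin m → ℝ),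
        dist (iterNnorm A γ N0 e n x) (iterNnorm A γ N0 e n y) ≤
          b / a * Cs / Nstar e * dist x y := by
      intro n x y
      obtain ⟨hsn, c, hc, hbd⟩ := key n
      have hNnE : 0 < iterN A γ N0 n e :=
        lt_of_lt_of_le (by positivity) (hbd e).1
      have h1 : dist (iterNnorm A γ N0 e n x) (iterNnorm A γ N0 e n y) =
          |iterN A γ N0 n x - iterN A γ N0 n y| / iterN A γ N0 n e := by
        rw [Real.dist_eq]
        show |iterN A γ N0 n x / iterN A γ N0 n e - iterN A γ N0 n y / iterN A γ N0 n e| = _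
        rw [div_sub_div_same, abs_div, abs_of_pos hNnE]
      rw [h1]
      have h2 : |iterN A γ N0 n x - iterN A γ N0 n y| ≤ c * (b * Nstar (x - y)) :=
        (hsn.abs_sub x y).trans (hbd _).2
      calc |iterN A γ N0 n x - iterN A γ N0 n y| / iterN A γ N0 n e ≤
            (c * (b * Nstar (x - y))) / (c * (a * Nstar e)) :=
          div_le_div₀ (mul_nonneg hc.le (mul_nonneg hb.le (hNs.1 _))) h2
            (mul_pos hc (mul_pos ha hNse)) (hbd e).1
        _ = b / a * (Nstar (x - y) / Nstar e) := by field_simp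
        _ ≤ b / a * (Cs * ‖x - y‖ / Nstar e) := by
            gcongr
            exact hNsle _
        _ = b / a * Cs / Nstar e * dist x y := by
            rw [dist_eq_norm]
            ring
    refine (Metric.equicontinuous_of_continuity_modulus
      (fun t => b / a * Cs / Nstar e * t) ?_ _ fun x y n => hK n x y).equicontinuousOn S
    have : Tendsto (fun t : ℝ => b / a * Cs / Nstar e * t) (𝓝 0) (𝓝 (b / a * Cs / Nstar e * 0)) :=
      (continuous_const.mul continuous_id).tendsto 0
    simpa using this
end
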